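/- arXiv:2307.13420 — 2 statements merged into one kernel-verified Lean document; each statement's English description precedes it below -/
import Mathlib

section
/- Let X be a set and σ : X → X a map such that every point of X is eventually periodic: for each x ∈ X there exist k ≥ 0 and n ≥ 1 with σ^{k+n}(x) = σ^{k}(x). Let η : ℤ[X] → ℤ[X] be the group homomorphism determined by η(δ_x) = δ_x − δ_{σ(x)}. For each cycle P of σ choose a point x_P ∈ P. Then the composition of the inclusion of the subgroup generated by {δ_{x_P} : P a cycle of σ} into ℤ[X] with the quotient map ℤ[X] → ℤ[X]/im(η) is a group isomorphism onto the cokernel of η; equivalently, the classes of the elements δ_{x_P} form a ℤ-basis of coker η. -/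
/-- `P` is a cycle (periodic orbit) of `σ`: the forward orbit of a periodic point. -/
def IsCycle {X : Type*} (σ : X → X) (P : Finset X) : Prop :=
  ∃ p ∈ P, (∃ n : ℕ, 0 < n ∧ σ^[n] p = p) ∧ ∀ x : X, x ∈ P ↔ ∃ k : ℕ, σ^[k] p = x

namespace CokerEtaAux

variable {X : Type*} {σ : X → X}

lemma iter_mul {n : ℕ} {p : X} (hp : σ^[n] p = p) : ∀ m, σ^[n * m] p = p
  | 0 => rfl
  | (m + 1) => by
      rw [Nat.mul_succ, Function.iterate_add_apply, hp, iter_mul hp m]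

lemma iter_mod {n : ℕ} (hn : 0 < n) {p : X} (hp : σ^[n] p = p) (k : ℕ) :
    σ^[k] p = σ^[k % n] p := by
  conv_lhs => rw [← Nat.mod_add_div k n, Function.iterate_add_apply,
    iter_mul hp (k / n)]

/-- The forward orbit of a point `p` of period `n`, as a finset. -/
noncomputable def orbit (σ : X → X) (p : X) (n : ℕ) : Finset X :=
  letI := Classical.decEq X
  (Finset.range n).image (fun j => σ^[j] p)

lemma mem_orbit {p x : X} {n : ℕ} :
    x ∈ orbit σ p n ↔ ∃ j, j < n ∧ σ^[j] p = x := by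
  letI := Classical.decEq X
  simp only [orbit, Finset.mem_image, Finset.mem_range]

lemma isCycle_orbit {n : ℕ} (hn : 0 < n) {p : X} (hp : σ^[n] p = p) :
    IsCycle σ (orbit σ p n) := by
  refine ⟨p, ?_, ⟨n, hn, hp⟩, ?_⟩
  · exact mem_orbit.2 ⟨0, hn, rfl⟩
  · intro x
    constructor
    · rintro hx
      obtain ⟨j, _, rfl⟩ := mem_orbit.1 hx
      exact ⟨j, rfl⟩
    · rintro ⟨k, rfl⟩
      exact mem_orbit.2 ⟨k % n, Nat.mod_lt _ hn, (iter_mod hn hp k).symm⟩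

/-- Any point of a cycle is a periodic generator of the cycle. -/
lemma cycle_generator {P : Finset X} (hP : IsCycle σ P) {y : X} (hy : y ∈ P) :
    (∃ n : ℕ, 0 < n ∧ σ^[n] y = y) ∧ ∀ x : X, x ∈ P ↔ ∃ k : ℕ, σ^[k] y = x := by
  obtain ⟨p, hpP, ⟨n, hn, hpn⟩, hchar⟩ := hP
  obtain ⟨a, ha⟩ := (hchar y).1 hy
  -- find c with σ^[c] y = p
  have hle : a ≤ n * a := Nat.le_mul_of_pos_left a hn
  have hc : σ^[n * a - a] y = p := by
    rw [← ha, ← Function.iterate_add_apply, Nat.sub_add_cancel hle, iter_mul hpn a]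
  have hyper : σ^[n] y = y := by
    rw [← ha, ← Function.iterate_add_apply, Nat.add_comm,
      Function.iterate_add_apply, hpn]
  refine ⟨⟨n, hn, hyper⟩, fun x => ?_⟩
  constructor
  · intro hx
    obtain ⟨k, hk⟩ := (hchar x).1 hx
    exact ⟨k + (n * a - a), by rw [Function.iterate_add_apply, hc, hk]⟩
  · rintro ⟨k, rfl⟩
    exact (hchar _).2 ⟨k + a, by rw [Function.iterate_add_apply, ha]⟩

lemma cycle_forward {P : Finset X} (hP : IsCycle σ P) {y : X} (hy : y ∈ P)
    (m : ℕ) : σ^[m] y ∈ P := by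
  obtain ⟨_, hchar⟩ := cycle_generator hP hy
  exact (hchar _).2 ⟨m, rfl⟩

lemma cycle_eq {P Q : Finset X} (hP : IsCycle σ P) (hQ : IsCycle σ Q) {y : X}
    (hyP : y ∈ P) (hyQ : y ∈ Q) : P = Q := by
  obtain ⟨_, hcharP⟩ := cycle_generator hP hyP
  obtain ⟨_, hcharQ⟩ := cycle_generator hQ hyQ
  ext x
  rw [hcharP, hcharQ]

lemma single_sub_iterate_mem_range {σ : X → X} (η : (X →₀ ℤ) →ₗ[ℤ] (X →₀ ℤ))
    (hη : ∀ x : X, η (Finsupp.single x 1) =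
      Finsupp.single x 1 - Finsupp.single (σ x) 1) (x : X) :
    ∀ k : ℕ, Finsupp.single x (1 : ℤ) - Finsupp.single (σ^[k] x) 1 ∈
      LinearMap.range η
  | 0 => by simp
  | (k + 1) => by
      have h1 := single_sub_iterate_mem_range η hη x k
      have h2 : η (Finsupp.single (σ^[k] x) 1) =
          Finsupp.single (σ^[k] x) 1 - Finsupp.single (σ^[k + 1] x) 1 := by
        rw [hη, Function.iterate_succ_apply']
      have : Finsupp.single x (1 : ℤ) - Finsupp.single (σ^[k + 1] x) 1 =
          (Finsupp.single x (1 : ℤ) - Finsupp.single (σ^[k] x) 1) +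
            η (Finsupp.single (σ^[k] x) 1) := by
        rw [h2]; abel
      rw [this]
      exact Submodule.add_mem _ h1 (LinearMap.mem_range_self η _)

end CokerEtaAux

open CokerEtaAux in
/-- **Cokernel computation (cf. Corollary 8.4 of the paper).** Let `σ : X → X` be a map
all of whose points are eventually periodic, and let `η : ℤ[X] → ℤ[X]` be the
(ℤ-linear) homomorphism determined by `η(δ_x) = δ_x − δ_{σ(x)}`.  For each cycle `P`
of `σ` choose `x_P ∈ P`.  Then the classes of the elements `δ_{x_P}` in
`ℤ[X]/im(η)` form a ℤ-basis of the cokernel of `η`: they are ℤ-linearly independent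
and they span. -/
theorem coker_eta_basis {X : Type*} (σ : X → X)
    (hep : ∀ x : X, ∃ k n : ℕ, 0 < n ∧ σ^[k + n] x = σ^[k] x)
    (η : (X →₀ ℤ) →ₗ[ℤ] (X →₀ ℤ))
    (hη : ∀ x : X, η (Finsupp.single x 1) =
      Finsupp.single x 1 - Finsupp.single (σ x) 1)
    (c : {P : Finset X // IsCycle σ P} → X) (hc : ∀ P, c P ∈ P.1) :
    LinearIndependent ℤ (fun P : {P : Finset X // IsCycle σ P} =>
      Submodule.Quotient.mk (p := LinearMap.range η) (Finsupp.single (c P) (1 : ℤ))) ∧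
    Submodule.span ℤ (Set.range fun P : {P : Finset X // IsCycle σ P} =>
      Submodule.Quotient.mk (p := LinearMap.range η)
        (Finsupp.single (c P) (1 : ℤ))) = ⊤ := by
  classical
  -- every point eventually lands in a cycle
  have cycF : ∀ x : X, ∃ P : {P : Finset X // IsCycle σ P}, ∃ k : ℕ, σ^[k] x ∈ P.1 := by
    intro x
    obtain ⟨k, n, hn, hper⟩ := hep x
    have hper' : σ^[n] (σ^[k] x) = σ^[k] x := by
      rw [← Function.iterate_add_apply, Nat.add_comm]; exact hper
    refine ⟨⟨orbit σ (σ^[k] x) n, isCycle_orbit hn hper'⟩, k, ?_⟩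
    exact mem_orbit.2 ⟨0, hn, rfl⟩
  choose cyc kx hkx using cycF
  -- uniqueness of the eventual cycle
  have uniq : ∀ (x : X) (P : {P : Finset X // IsCycle σ P}) (k : ℕ), σ^[k] x ∈ P.1 → cyc x = P := by
    intro x P k hk
    have h1 : σ^[max k (kx x)] x ∈ (cyc x).1 := by
      have := cycle_forward (cyc x).2 (hkx x) (max k (kx x) - kx x)
      rwa [← Function.iterate_add_apply,
        Nat.sub_add_cancel (le_max_right _ _)] at this
    have h2 : σ^[max k (kx x)] x ∈ P.1 := by
      have := cycle_forward P.2 hk (max k (kx x) - k)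
      rwa [← Function.iterate_add_apply,
        Nat.sub_add_cancel (le_max_left _ _)] at this
    exact Subtype.ext (cycle_eq (cyc x).2 P.2 h1 h2)
  have cyc_sigma : ∀ x : X, cyc (σ x) = cyc x := by
    intro x
    have : σ^[kx (σ x) + 1] x ∈ (cyc (σ x)).1 := by
      rw [Function.iterate_succ_apply]; exact hkx (σ x)
    exact ((uniq x (cyc (σ x)) _ this)).symm
  have cyc_c : ∀ P : {P : Finset X // IsCycle σ P}, cyc (c P) = P := fun P => uniq (c P) P 0 (by simpa using hc P)
  -- the retraction φ
  set φ : (X →₀ ℤ) →ₗ[ℤ] ({P : Finset X // IsCycle σ P} →₀ ℤ) := Finsupp.lmapDomain ℤ ℤ cyc with hφ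
  have φ_single : ∀ x : X, φ (Finsupp.single x (1 : ℤ)) =
      Finsupp.single (cyc x) 1 := fun x => Finsupp.mapDomain_single
  have φη : ∀ v, φ (η v) = 0 := by
    have : φ.comp η = 0 := by
      apply Finsupp.lhom_ext'
      intro x
      apply LinearMap.ext_ring
      simp only [LinearMap.comp_apply, Finsupp.lsingle_apply, LinearMap.zero_apply,
        hη, map_sub, φ_single, cyc_sigma, sub_self]
    intro v
    exact congrFun (congrArg DFunLike.coe this) v
  set ψ : ((X →₀ ℤ) ⧸ LinearMap.range η) →ₗ[ℤ] ({P : Finset X // IsCycle σ P} →₀ ℤ) :=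
    Submodule.liftQ (LinearMap.range η) φ (by
      rintro _ ⟨v, rfl⟩
      exact φη v) with hψ
  have ψ_mk : ∀ P : {P : Finset X // IsCycle σ P}, ψ (Submodule.Quotient.mk (p := LinearMap.range η)
      (Finsupp.single (c P) (1 : ℤ))) = Finsupp.single P 1 := by
    intro P
    rw [hψ, Submodule.liftQ_apply, φ_single, cyc_c]
  constructor
  · -- linear independence
    have hb : LinearIndependent ℤ (fun P : {P : Finset X // IsCycle σ P} => Finsupp.single P (1 : ℤ)) := by
      have := (Finsupp.basisSingleOne (R := ℤ) (ι := {P : Finset X // IsCycle σ P})).linearIndependent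
      rwa [Finsupp.coe_basisSingleOne] at this
    refine LinearIndependent.of_comp ψ ?_
    have : (ψ ∘ fun P : {P : Finset X // IsCycle σ P} => Submodule.Quotient.mk (p := LinearMap.range η)
        (Finsupp.single (c P) (1 : ℤ))) = fun P : {P : Finset X // IsCycle σ P} => Finsupp.single P (1 : ℤ) := by
      funext P; exact ψ_mk P
    rw [this]; exact hb
  · -- spanning
    rw [eq_top_iff]
    rintro z -
    obtain ⟨v, rfl⟩ := Submodule.Quotient.mk_surjective (LinearMap.range η) z
    induction v using Finsupp.induction_linear with
    | zero => simp
    | add f g hf hg =>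
        rw [Submodule.Quotient.mk_add]
        exact Submodule.add_mem _ hf hg
    | single x b =>
        have key : Submodule.Quotient.mk (p := LinearMap.range η)
            (Finsupp.single x (1 : ℤ)) =
            Submodule.Quotient.mk (p := LinearMap.range η)
              (Finsupp.single (c (cyc x)) (1 : ℤ)) := by
          rw [Submodule.Quotient.eq]
          obtain ⟨_, hchar⟩ := cycle_generator (cyc x).2 (hkx x)
          obtain ⟨j, hj⟩ := (hchar (c (cyc x))).1 (hc (cyc x))
          have : σ^[j + kx x] x = c (cyc x) := by
            rw [Function.iterate_add_apply]; exact hj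
          rw [← this]
          exact single_sub_iterate_mem_range η hη x (j + kx x)
        have : Submodule.Quotient.mk (p := LinearMap.range η)
            (Finsupp.single x b) = b • Submodule.Quotient.mk (p := LinearMap.range η)
              (Finsupp.single (c (cyc x)) (1 : ℤ)) := by
          rw [← key, ← Submodule.Quotient.mk_smul]
          congr 1
          rw [Finsupp.smul_single, smul_eq_mul, mul_one]
        rw [this]
        exact Submodule.smul_mem _ _ (Submodule.subset_span ⟨cyc x, rfl⟩)
end

section
/- Let F : X → Y be a branched function with transfer operator Φ, and suppose the degree counted with multiplicity D := sup_{y ∈ Y} ∑_{x ∈ F⁻¹(y)} ind_F(x) is finite. Then for every ψ ∈ C₀(X) the function Φ(|ψ|²) is finite everywhere and belongs to C₀(Y) (so C₂(X) = C₀(X)), and ‖ψ‖_∞² ≤ ‖Φ(|ψ|²)‖_∞ ≤ D·‖ψ‖_∞². -/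
open Filter Topology

/-- `F` admits a system of inverse branches centered at `x`, relative to the index
function `ind`. -/
def BranchedAt {X Y : Type*} [TopologicalSpace X] [TopologicalSpace Y]
    (F : X → Y) (ind : X → ℕ) (x : X) : Prop :=
  ∃ (U : Set X) (V : Set Y) (g : Fin (ind x) → Y → X),
    IsOpen U ∧ x ∈ U ∧ IsOpen V ∧ F x ∈ V ∧
    (∀ i, ∀ v ∈ V, g i v ∈ U) ∧
    (∀ i, ∀ v ∈ V, F (g i v) = v) ∧
    (∀ i, g i (F x) = x) ∧
    (∀ i, ContinuousWithinAt (g i) V (F x)) ∧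
    (U = ⋃ i, g i '' V) ∧
    (∀ u ∈ U, ind u = Nat.card {i : Fin (ind x) // u ∈ g i '' V})

/-- `F` is a branched function with index function `ind`. -/
def IsBranched {X Y : Type*} [TopologicalSpace X] [TopologicalSpace Y]
    (F : X → Y) (ind : X → ℕ) : Prop :=
  Continuous F ∧ (∀ x, 0 < ind x) ∧ ∀ x, BranchedAt F ind x

/-- The transfer operator applied to `|f|²`:
`Φ(|f|²)(y) = ∑_{x ∈ F⁻¹(y)} ind_F(x)·|f(x)|²`. -/
noncomputable def transferSq {X Y : Type*} (F : X → Y) (ind : X → ℕ) (f : X → ℂ) (y : Y) : ℝ :=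
  ∑' x : F ⁻¹' {y}, (ind x.1 : ℝ) * ‖f x.1‖ ^ 2

private lemma fiber_finite_aux {X Y : Type*} {F : X → Y} {ind : X → ℕ} (hind : ∀ x, 0 < ind x)
    {y : Y} (hs : Summable (fun x : F ⁻¹' {y} => (ind x.1 : ℝ))) : (F ⁻¹' {y}).Finite := by
  rw [← Set.finite_coe_iff]
  have h2 : ∀ᶠ x in (Filter.cofinite : Filter (F ⁻¹' {y})), ((ind x.1 : ℝ)) < 1 :=
    hs.tendsto_cofinite_zero.eventually (gt_mem_nhds one_pos)
  rw [Filter.eventually_cofinite] at h2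
  have huniv : (Set.univ : Set (F ⁻¹' {y})).Finite := h2.subset (by
    intro x _
    simp only [Set.mem_setOf_eq, not_lt]
    exact_mod_cast hind x.1)
  exact Set.finite_univ_iff.mp huniv

set_option maxHeartbeats 1000000 in
/-- **Finite degree: `C₂(X) = C₀(X)` with equivalent norms.** If the degree counted
with multiplicity `D = sup_y ∑_{x ∈ F⁻¹(y)} ind_F(x)` of a branched function
`F : X → Y` is finite (i.e. each fiber sum of indices converges and is bounded by
`D`), then for every `ψ ∈ C₀(X)` the function `Φ(|ψ|²)` is finite everywhere and
belongs to `C₀(Y)`, and `‖ψ‖_∞² ≤ ‖Φ(|ψ|²)‖_∞ ≤ D·‖ψ‖_∞²`. -/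
theorem c2_eq_c0_of_finite_degree {X Y : Type*}
    [TopologicalSpace X] [T2Space X] [LocallyCompactSpace X]
    [TopologicalSpace Y] [T2Space Y] [LocallyCompactSpace Y]
    (F : X → Y) (ind : X → ℕ) (hF : IsBranched F ind)
    (D : ℝ)
    (hD : ∀ y : Y, Summable (fun x : F ⁻¹' {y} => (ind x.1 : ℝ)) ∧
      (∑' x : F ⁻¹' {y}, (ind x.1 : ℝ)) ≤ D) :
    ∀ ψ : X → ℂ, Continuous ψ → Tendsto ψ (cocompact X) (nhds 0) →
      (∀ y : Y, Summable fun x : F ⁻¹' {y} => (ind x.1 : ℝ) * ‖ψ x.1‖ ^ 2) ∧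
      Continuous (transferSq F ind ψ) ∧
      Tendsto (transferSq F ind ψ) (cocompact Y) (nhds 0) ∧
      (∀ x : X, ‖ψ x‖ ^ 2 ≤ ⨆ y : Y, transferSq F ind ψ y) ∧
      (∀ y : Y, transferSq F ind ψ y ≤ D * (⨆ x : X, ‖ψ x‖) ^ 2) := by
  classical
  intro ψ hψc hψ0
  obtain ⟨hFc, hind, hbr⟩ := hF
  -- ψ is bounded
  obtain ⟨K₁, hK₁, hK₁ψ⟩ : ∃ K : Set X, IsCompact K ∧ ∀ x ∉ K, ‖ψ x‖ ≤ 1 := by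
    have h := hψ0 (Metric.closedBall_mem_nhds (0 : ℂ) one_pos)
    rw [Filter.mem_map, Filter.mem_cocompact] at h
    obtain ⟨K, hK, hKs⟩ := h
    refine ⟨K, hK, fun x hx => ?_⟩
    have := hKs hx
    simpa [Metric.mem_closedBall, Complex.dist_eq] using this
  obtain ⟨C, hC⟩ : ∃ C : ℝ, ∀ x ∈ K₁, ‖ψ x‖ ≤ C := by
    obtain ⟨C, hC⟩ := hK₁.exists_bound_of_continuousOn (hψc.continuousOn (s := K₁))
    exact ⟨C, fun x hx => by simpa using hC x hx⟩
  have hbdd : ∀ x, ‖ψ x‖ ≤ max C 1 := by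
    intro x
    by_cases hx : x ∈ K₁
    · exact (hC x hx).trans (le_max_left _ _)
    · exact (hK₁ψ x hx).trans (le_max_right _ _)
  set M : ℝ := ⨆ x : X, ‖ψ x‖ with hMdef
  have hMb : BddAbove (Set.range fun x => ‖ψ x‖) := by
    refine ⟨max C 1, ?_⟩
    rintro r ⟨x, rfl⟩
    exact hbdd x
  have hM : ∀ x, ‖ψ x‖ ≤ M := fun x => le_ciSup hMb x
  have hM0 : 0 ≤ M := by
    rcases isEmpty_or_nonempty X with hX | hX
    · have : M = 0 := by rw [hMdef, iSup, Set.range_eq_empty, Real.sSup_empty]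
      linarith
    · exact (norm_nonneg _).trans (hM hX.some)
  -- summability
  have hsum : ∀ y : Y, Summable fun x : F ⁻¹' {y} => (ind x.1 : ℝ) * ‖ψ x.1‖ ^ 2 := by
    intro y
    refine Summable.of_nonneg_of_le (fun x => by positivity) (fun x => ?_)
      ((hD y).1.mul_right (M ^ 2))
    have h1 : ‖ψ x.1‖ ^ 2 ≤ M ^ 2 := by
      have := hM x.1
      have := norm_nonneg (ψ x.1)
      nlinarith
    exact mul_le_mul_of_nonneg_left h1 (by positivity)
  -- upper bound
  have h5 : ∀ y : Y, transferSq F ind ψ y ≤ D * M ^ 2 := by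
    intro y
    rw [transferSq]
    calc (∑' x : F ⁻¹' {y}, (ind x.1 : ℝ) * ‖ψ x.1‖ ^ 2)
        ≤ ∑' x : F ⁻¹' {y}, (ind x.1 : ℝ) * M ^ 2 := by
          refine Summable.tsum_le_tsum (fun x => ?_) (hsum y) ((hD y).1.mul_right (M ^ 2))
          have h1 : ‖ψ x.1‖ ^ 2 ≤ M ^ 2 := by
            have := hM x.1
            have := norm_nonneg (ψ x.1)
            nlinarith
          exact mul_le_mul_of_nonneg_left h1 (by positivity)
      _ = (∑' x : F ⁻¹' {y}, (ind x.1 : ℝ)) * M ^ 2 := (hD y).1.tsum_mul_right _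
      _ ≤ D * M ^ 2 := mul_le_mul_of_nonneg_right (hD y).2 (by positivity)
  -- lower bound
  have h4 : ∀ x : X, ‖ψ x‖ ^ 2 ≤ ⨆ y : Y, transferSq F ind ψ y := by
    intro x
    have hx1 : ‖ψ x‖ ^ 2 ≤ transferSq F ind ψ (F x) := by
      have h1 : ‖ψ x‖ ^ 2 ≤ (ind x : ℝ) * ‖ψ x‖ ^ 2 := by
        refine le_mul_of_one_le_left (by positivity) ?_
        exact_mod_cast hind x
      refine h1.trans ?_
      exact Summable.le_tsum (hsum (F x)) ⟨x, rfl⟩ (fun b _ => by positivity)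
    refine hx1.trans (le_ciSup ⟨D * M ^ 2, ?_⟩ (F x))
    rintro r ⟨y, rfl⟩
    exact h5 y
  -- fiber finiteness
  have hfib : ∀ y : Y, (F ⁻¹' {y}).Finite := fun y => fiber_finite_aux hind (hD y).1
  -- transferSq as a finite sum
  have hfin : ∀ y : Y, transferSq F ind ψ y
      = ∑ u ∈ (hfib y).toFinset, (ind u : ℝ) * ‖ψ u‖ ^ 2 := by
    intro y
    rw [transferSq, ← Finset.tsum_subtype' ((hfib y).toFinset)
      (fun u => (ind u : ℝ) * ‖ψ u‖ ^ 2)]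
    exact tsum_congr_set_coe (fun u => (ind u : ℝ) * ‖ψ u‖ ^ 2)
      ((hfib y).coe_toFinset).symm
  have hindfin : ∀ y : Y, ∑ u ∈ (hfib y).toFinset, (ind u : ℝ) ≤ D := by
    intro y
    have : (∑' x : F ⁻¹' {y}, (ind x.1 : ℝ)) = ∑ u ∈ (hfib y).toFinset, (ind u : ℝ) := by
      rw [← Finset.tsum_subtype' ((hfib y).toFinset) (fun u => (ind u : ℝ))]
      exact tsum_congr_set_coe (fun u => (ind u : ℝ)) ((hfib y).coe_toFinset).symm
    rw [← this]; exact (hD y).2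
  have hD0max : (0:ℝ) ≤ max D 0 := le_max_right _ _
  -- branch data
  choose U V g hbprop using hbr
  have hUo : ∀ x, IsOpen (U x) := fun x => (hbprop x).1
  have hxU : ∀ x, x ∈ U x := fun x => (hbprop x).2.1
  have hVo : ∀ x, IsOpen (V x) := fun x => (hbprop x).2.2.1
  have hFxV : ∀ x, F x ∈ V x := fun x => (hbprop x).2.2.2.1
  have hFg : ∀ x i, ∀ v ∈ V x, F (g x i v) = v := fun x => (hbprop x).2.2.2.2.2.1
  have hgFx : ∀ x i, g x i (F x) = x := fun x => (hbprop x).2.2.2.2.2.2.1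
  have hgc : ∀ x i, ContinuousWithinAt (g x i) (V x) (F x) :=
    fun x => (hbprop x).2.2.2.2.2.2.2.1
  have hUeq : ∀ x, U x = ⋃ i, g x i '' V x := fun x => (hbprop x).2.2.2.2.2.2.2.2.1
  have hcard : ∀ x, ∀ u ∈ U x, ind u = Nat.card {i : Fin (ind x) // u ∈ g x i '' V x} :=
    fun x => (hbprop x).2.2.2.2.2.2.2.2.2
  -- continuity
  have h2 : Continuous (transferSq F ind ψ) := by
    rw [continuous_iff_continuousAt]
    intro y₀
    rw [ContinuousAt, Metric.tendsto_nhds]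
    intro ε hε
    set s₀ : Finset X := (hfib y₀).toFinset with hs₀def
    have hs₀ : ∀ x, x ∈ s₀ ↔ F x = y₀ := by
      intro x; simp [hs₀def, Set.Finite.mem_toFinset]
    obtain ⟨W, hW, hWd⟩ := (hfib y₀).t2_separation
    set O : X → Set X := fun x => U x ∩ W x with hOdef
    have hOo : ∀ x, IsOpen (O x) := fun x => (hUo x).inter (hW x).2
    have hxO : ∀ x, x ∈ O x := fun x => ⟨hxU x, (hW x).1⟩
    set B : ℝ := ∑ x ∈ s₀, (ind x : ℝ) with hBdef
    have hB0 : 0 ≤ B := Finset.sum_nonneg (fun x _ => by positivity)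
    set δ : ℝ := ε / (2 * (B + 1)) with hδdef
    have hδ : 0 < δ := by positivity
    set c : ℝ := ε / (2 * (max D 0 + 1)) with hcdef
    have hc : 0 < c := by positivity
    -- compact set outside of which ψ² < c
    obtain ⟨K, hK, hKψ⟩ : ∃ K : Set X, IsCompact K ∧ ∀ x ∉ K, ‖ψ x‖ ^ 2 < c := by
      have h := hψ0 (Metric.ball_mem_nhds (0 : ℂ) (Real.sqrt_pos.mpr hc))
      rw [Filter.mem_map, Filter.mem_cocompact] at h
      obtain ⟨K, hK, hKs⟩ := h
      refine ⟨K, hK, fun x hx => ?_⟩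
      have h1 : ‖ψ x‖ < Real.sqrt c := by
        have := hKs hx
        simpa [Metric.mem_ball, Complex.dist_eq] using this
      calc ‖ψ x‖ ^ 2 < Real.sqrt c ^ 2 := by
            have := norm_nonneg (ψ x); nlinarith
        _ = c := Real.sq_sqrt hc.le
    -- the neighbourhood excluding extra preimages in K
    set T : Set X := K \ ⋃ x ∈ s₀, O x with hTdef
    have hTc : IsCompact T := hK.diff (isOpen_biUnion (fun x _ => hOo x))
    have hN₀ : (F '' T)ᶜ ∈ 𝓝 y₀ := by
      refine IsOpen.mem_nhds (hTc.image hFc).isClosed.isOpen_compl ?_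
      rintro ⟨u, ⟨huK, huO⟩, hFu⟩
      exact huO (Set.mem_biUnion ((hs₀ u).2 hFu) (hxO u))
    -- branch-wise control
    have hbranch : ∀ x ∈ s₀, ∀ i : Fin (ind x), ∀ᶠ y in 𝓝 y₀,
        g x i y ∈ O x ∧
        |‖ψ (g x i y)‖ ^ 2 - ‖ψ x‖ ^ 2| < δ := by
      intro x hx i
      have hFx : F x = y₀ := (hs₀ x).1 hx
      have hVnb : 𝓝[V x] (F x) = 𝓝 (F x) :=
        nhdsWithin_eq_nhds.2 ((hVo x).mem_nhds (hFxV x))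
      have h1 : Tendsto (g x i) (𝓝 y₀) (𝓝 x) := by
        have := hgc x i
        rw [ContinuousWithinAt, hgFx x i, hVnb, hFx] at this
        exact this
      have hA : ∀ᶠ y in 𝓝 y₀, g x i y ∈ O x :=
        h1 ((hOo x).mem_nhds (hxO x))
      have h2 : Tendsto (fun y => ‖ψ (g x i y)‖ ^ 2) (𝓝 y₀)
          (𝓝 (‖ψ x‖ ^ 2)) := by
        have hcont : Continuous (fun z : X => ‖ψ z‖ ^ 2) :=
          (continuous_norm.comp hψc).pow 2
        exact (hcont.tendsto x).comp h1
      have hB' : ∀ᶠ y in 𝓝 y₀,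
          |‖ψ (g x i y)‖ ^ 2 - ‖ψ x‖ ^ 2| < δ := by
        have := Metric.tendsto_nhds.mp h2 δ hδ
        simpa [Real.dist_eq] using this
      exact hA.and hB'
    have hall : ∀ᶠ y in 𝓝 y₀, ∀ x ∈ s₀, ∀ i : Fin (ind x),
        g x i y ∈ O x ∧
        |‖ψ (g x i y)‖ ^ 2 - ‖ψ x‖ ^ 2| < δ := by
      rw [Filter.eventually_all_finset]
      intro x hx
      rw [eventually_all]
      exact hbranch x hx
    have hVall : ∀ᶠ y in 𝓝 y₀, ∀ x ∈ s₀, y ∈ V x := by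
      rw [Filter.eventually_all_finset]
      intro x hx
      have hFx : F x = y₀ := (hs₀ x).1 hx
      exact (hVo x).mem_nhds (hFx ▸ hFxV x)
    filter_upwards [hN₀, hall, hVall] with y hyT hy hyV
    -- main computation
    set fib : Finset X := (hfib y).toFinset with hfibdef
    have hfibmem : ∀ u, u ∈ fib ↔ F u = y := by
      intro u; simp [hfibdef, Set.Finite.mem_toFinset]
    -- decomposition of the fiber sum
    have hsplit : ∑ u ∈ fib, (ind u : ℝ) * ‖ψ u‖ ^ 2 =
        (∑ u ∈ fib.filter (fun u => u ∈ ⋃ x ∈ s₀, O x), (ind u : ℝ) * ‖ψ u‖ ^ 2)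
        + ∑ u ∈ fib.filter (fun u => ¬ u ∈ ⋃ x ∈ s₀, O x),
            (ind u : ℝ) * ‖ψ u‖ ^ 2 :=
      (Finset.sum_filter_add_sum_filter_not fib _ _).symm
    -- the main filtered part
    have hbiU : fib.filter (fun u => u ∈ ⋃ x ∈ s₀, O x)
        = s₀.biUnion (fun x => fib.filter (fun u => u ∈ O x)) := by
      ext u
      simp only [Finset.mem_filter, Finset.mem_biUnion, Set.mem_iUnion, exists_prop]
      tauto
    have hdisj : ∀ x ∈ (s₀ : Set X), ∀ x' ∈ (s₀ : Set X), x ≠ x' →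
        Disjoint (fib.filter (fun u => u ∈ O x)) (fib.filter (fun u => u ∈ O x')) := by
      intro x hx x' hx' hne
      rw [Finset.disjoint_left]
      intro u hu hu'
      have h1 : u ∈ W x := (Finset.mem_filter.mp hu).2.2
      have h2 : u ∈ W x' := (Finset.mem_filter.mp hu').2.2
      have hxf : x ∈ F ⁻¹' {y₀} := (hs₀ x).1 (Finset.mem_coe.mp hx)
      have hx'f : x' ∈ F ⁻¹' {y₀} := (hs₀ x').1 (Finset.mem_coe.mp hx')
      exact (hWd hxf hx'f hne).le_bot ⟨h1, h2⟩
    have hmain : ∀ x ∈ s₀, ∑ u ∈ fib.filter (fun u => u ∈ O x),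
        (ind u : ℝ) * ‖ψ u‖ ^ 2
        = ∑ i : Fin (ind x), ‖ψ (g x i y)‖ ^ 2 := by
      intro x hx
      have hyVx : y ∈ V x := hyV x hx
      set e : Fin (ind x) → X := fun i => g x i y with hedef
      have hFe : ∀ i, F (e i) = y := fun i => hFg x i y hyVx
      have heO : ∀ i, e i ∈ O x := fun i => (hy x hx i).1
      have himg : Finset.univ.image e = fib.filter (fun u => u ∈ O x) := by
        ext u
        simp only [Finset.mem_image, Finset.mem_filter, Finset.mem_univ, true_and]
        constructor
        · rintro ⟨i, rfl⟩
          exact ⟨(hfibmem _).2 (hFe i), heO i⟩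
        · rintro ⟨hufib, huO⟩
          have huU : u ∈ U x := huO.1
          rw [hUeq x] at huU
          obtain ⟨_, ⟨i, rfl⟩, v, hv, rfl⟩ := huU
          have : v = y := by rw [← hFg x i v hv]; exact (hfibmem _).1 hufib
          exact ⟨i, by rw [hedef, ← this]⟩
      have hcnt : ∀ u ∈ fib.filter (fun u => u ∈ O x),
          (Finset.univ.filter (fun i => e i = u)).card = ind u := by
        intro u hu
        obtain ⟨hufib, huO⟩ := Finset.mem_filter.mp hu
        have hFu : F u = y := (hfibmem u).1 hufib
        rw [hcard x u huO.1, Nat.card_eq_fintype_card, Fintype.card_subtype]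
        congr 1
        refine Finset.filter_congr (fun i _ => ?_)
        constructor
        · intro h; exact ⟨y, hyVx, h⟩
        · rintro ⟨v, hv, hvu⟩
          have hvy : v = y := by rw [← hFg x i v hv, hvu, hFu]
          rw [hedef]; rw [hvy] at hvu; exact hvu
      rw [Finset.sum_comp (fun u => ‖ψ u‖ ^ 2) e, himg]
      apply Finset.sum_congr rfl
      intro u hu
      rw [hcnt u hu, nsmul_eq_mul]
    -- the remainder part
    have hrem0 : 0 ≤ ∑ u ∈ fib.filter (fun u => ¬ u ∈ ⋃ x ∈ s₀, O x),
        (ind u : ℝ) * ‖ψ u‖ ^ 2 :=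
      Finset.sum_nonneg (fun u _ => by positivity)
    have hrem : ∑ u ∈ fib.filter (fun u => ¬ u ∈ ⋃ x ∈ s₀, O x),
        (ind u : ℝ) * ‖ψ u‖ ^ 2 ≤ max D 0 * c := by
      have hstep : ∀ u ∈ fib.filter (fun u => ¬ u ∈ ⋃ x ∈ s₀, O x),
          (ind u : ℝ) * ‖ψ u‖ ^ 2 ≤ (ind u : ℝ) * c := by
        intro u hu
        obtain ⟨hufib, huO⟩ := Finset.mem_filter.mp hu
        have huK : u ∉ K := by
          intro huK
          exact hyT ⟨u, ⟨huK, huO⟩, (hfibmem u).1 hufib⟩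
        exact mul_le_mul_of_nonneg_left (hKψ u huK).le (by positivity)
      calc ∑ u ∈ fib.filter (fun u => ¬ u ∈ ⋃ x ∈ s₀, O x),
            (ind u : ℝ) * ‖ψ u‖ ^ 2
          ≤ ∑ u ∈ fib.filter (fun u => ¬ u ∈ ⋃ x ∈ s₀, O x), (ind u : ℝ) * c :=
            Finset.sum_le_sum hstep
        _ = (∑ u ∈ fib.filter (fun u => ¬ u ∈ ⋃ x ∈ s₀, O x), (ind u : ℝ)) * c := by
            rw [Finset.sum_mul]
        _ ≤ (∑ u ∈ fib, (ind u : ℝ)) * c := by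
            refine mul_le_mul_of_nonneg_right ?_ hc.le
            exact Finset.sum_le_sum_of_subset_of_nonneg (Finset.filter_subset _ _)
              (fun u _ _ => by positivity)
        _ ≤ D * c := mul_le_mul_of_nonneg_right (hindfin y) hc.le
        _ ≤ max D 0 * c := mul_le_mul_of_nonneg_right (le_max_left _ _) hc.le
    -- value at y₀
    have hy₀val : transferSq F ind ψ y₀ =
        ∑ x ∈ s₀, ∑ i : Fin (ind x), ‖ψ x‖ ^ 2 := by
      rw [hfin y₀, ← hs₀def]
      apply Finset.sum_congr rfl
      intro x _
      rw [Finset.sum_const, Finset.card_univ, Fintype.card_fin, nsmul_eq_mul]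
    -- value at y
    have hyval : transferSq F ind ψ y =
        (∑ x ∈ s₀, ∑ i : Fin (ind x), ‖ψ (g x i y)‖ ^ 2)
        + ∑ u ∈ fib.filter (fun u => ¬ u ∈ ⋃ x ∈ s₀, O x),
            (ind u : ℝ) * ‖ψ u‖ ^ 2 := by
      rw [hfin y, ← hfibdef, hsplit, hbiU, Finset.sum_biUnion hdisj]
      congr 1
      exact Finset.sum_congr rfl hmain
    -- the estimate
    rw [Real.dist_eq, hyval, hy₀val]
    have hkey : |(∑ x ∈ s₀, ∑ i : Fin (ind x), ‖ψ (g x i y)‖ ^ 2)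
        + (∑ u ∈ fib.filter (fun u => ¬ u ∈ ⋃ x ∈ s₀, O x),
            (ind u : ℝ) * ‖ψ u‖ ^ 2)
        - ∑ x ∈ s₀, ∑ i : Fin (ind x), ‖ψ x‖ ^ 2|
        ≤ (∑ x ∈ s₀, ∑ i : Fin (ind x),
            |‖ψ (g x i y)‖ ^ 2 - ‖ψ x‖ ^ 2|)
          + ∑ u ∈ fib.filter (fun u => ¬ u ∈ ⋃ x ∈ s₀, O x),
            (ind u : ℝ) * ‖ψ u‖ ^ 2 := by
      have heq : (∑ x ∈ s₀, ∑ i : Fin (ind x), ‖ψ (g x i y)‖ ^ 2)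
          + (∑ u ∈ fib.filter (fun u => ¬ u ∈ ⋃ x ∈ s₀, O x),
              (ind u : ℝ) * ‖ψ u‖ ^ 2)
          - ∑ x ∈ s₀, ∑ i : Fin (ind x), ‖ψ x‖ ^ 2
          = (∑ x ∈ s₀, ∑ i : Fin (ind x),
              (‖ψ (g x i y)‖ ^ 2 - ‖ψ x‖ ^ 2))
            + ∑ u ∈ fib.filter (fun u => ¬ u ∈ ⋃ x ∈ s₀, O x),
              (ind u : ℝ) * ‖ψ u‖ ^ 2 := by
        simp only [Finset.sum_sub_distrib]
        ring
      rw [heq]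
      refine (abs_add_le _ _).trans ?_
      gcongr
      · refine (Finset.abs_sum_le_sum_abs _ _).trans ?_
        refine Finset.sum_le_sum (fun x _ => ?_)
        exact Finset.abs_sum_le_sum_abs _ _
      · exact (abs_of_nonneg hrem0).le
    refine lt_of_le_of_lt hkey ?_
    have hpart1 : (∑ x ∈ s₀, ∑ i : Fin (ind x),
        |‖ψ (g x i y)‖ ^ 2 - ‖ψ x‖ ^ 2|) ≤ B * δ := by
      calc (∑ x ∈ s₀, ∑ i : Fin (ind x),
          |‖ψ (g x i y)‖ ^ 2 - ‖ψ x‖ ^ 2|)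
          ≤ ∑ x ∈ s₀, ∑ _i : Fin (ind x), δ := by
            refine Finset.sum_le_sum (fun x hx => Finset.sum_le_sum (fun i _ => ?_))
            exact (hy x hx i).2.le
        _ = B * δ := by
            rw [hBdef, Finset.sum_mul]
            apply Finset.sum_congr rfl
            intro x _
            rw [Finset.sum_const, Finset.card_univ, Fintype.card_fin, nsmul_eq_mul]
    have : B * δ + max D 0 * c < ε := by
      have h1 : B * δ < (B + 1) * δ := by nlinarith
      have h2 : max D 0 * c < (max D 0 + 1) * c := by nlinarith
      have h3 : (B + 1) * δ = ε / 2 := by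
        rw [hδdef]; field_simp
      have h4 : (max D 0 + 1) * c = ε / 2 := by
        rw [hcdef]; field_simp
      linarith
    linarith [hpart1, hrem]
  -- vanishing at infinity
  have h3 : Tendsto (transferSq F ind ψ) (cocompact Y) (nhds 0) := by
    rw [Metric.tendsto_nhds]
    intro ε hε
    set c : ℝ := ε / (2 * (max D 0 + 1)) with hcdef
    have hc : 0 < c := by positivity
    obtain ⟨K, hK, hKψ⟩ : ∃ K : Set X, IsCompact K ∧ ∀ x ∉ K, ‖ψ x‖ ^ 2 < c := by
      have h := hψ0 (Metric.ball_mem_nhds (0 : ℂ) (Real.sqrt_pos.mpr hc))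
      rw [Filter.mem_map, Filter.mem_cocompact] at h
      obtain ⟨K, hK, hKs⟩ := h
      refine ⟨K, hK, fun x hx => ?_⟩
      have h1 : ‖ψ x‖ < Real.sqrt c := by
        have := hKs hx
        simpa [Metric.mem_ball, Complex.dist_eq] using this
      calc ‖ψ x‖ ^ 2 < Real.sqrt c ^ 2 := by
            have := norm_nonneg (ψ x); nlinarith
        _ = c := Real.sq_sqrt hc.le
    rw [Filter.eventually_iff, Filter.mem_cocompact]
    refine ⟨F '' K, hK.image hFc, fun y hy => ?_⟩
    simp only [Set.mem_compl_iff, Set.mem_image, not_exists, not_and] at hy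
    have hbound : transferSq F ind ψ y ≤ max D 0 * c := by
      rw [transferSq]
      calc (∑' x : F ⁻¹' {y}, (ind x.1 : ℝ) * ‖ψ x.1‖ ^ 2)
          ≤ ∑' x : F ⁻¹' {y}, (ind x.1 : ℝ) * c := by
            refine Summable.tsum_le_tsum (fun x => ?_) (hsum y) ((hD y).1.mul_right c)
            refine mul_le_mul_of_nonneg_left ?_ (by positivity)
            refine (hKψ x.1 (fun hxK => ?_)).le
            exact hy x.1 hxK x.2
        _ = (∑' x : F ⁻¹' {y}, (ind x.1 : ℝ)) * c := (hD y).1.tsum_mul_right _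
        _ ≤ max D 0 * c := mul_le_mul_of_nonneg_right
            ((hD y).2.trans (le_max_left _ _)) hc.le
    have hnn : 0 ≤ transferSq F ind ψ y := tsum_nonneg (fun x => by positivity)
    simp only [Set.mem_setOf_eq, Real.dist_eq, sub_zero]
    rw [abs_of_nonneg hnn]
    have : max D 0 * c < (max D 0 + 1) * c := by nlinarith [le_max_right D 0]
    have h4 : (max D 0 + 1) * c = ε / 2 := by
      rw [hcdef]; field_simp
    linarith
  exact ⟨hsum, h2, h3, h4, h5⟩
end
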